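/- The only integer solution (t, x) of the equation x^3 - t^2 x + t^2 = 0 is (t, x) = (0, 0). -/
import Mathlib

/-- The only integer solution of `x³ - t²x + t² = 0` is `(t, x) = (0, 0)`. -/
theorem C2_only_integral_point (t x : ℤ) :
    x ^ 3 - t ^ 2 * x + t ^ 2 = 0 ↔ t = 0 ∧ x = 0 := by
  constructor
  · intro h
    have hx3 : x ^ 3 = t ^ 2 * (x - 1) := by ring_nf; linarith
    have hdvd : (x - 1) ∣ 1 := by
      have h1 : (x - 1) ∣ x ^ 3 := ⟨t ^ 2, by linarith [hx3]⟩
      have h2 : (1 : ℤ) = x ^ 3 - (x - 1) * (x ^ 2 + x + 1) := by ring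
      have h3 := dvd_sub h1 (dvd_mul_right (x - 1) (x ^ 2 + x + 1))
      rwa [← h2] at h3
    have := Int.isUnit_iff.mp (isUnit_of_dvd_one hdvd)
    rcases this with h1 | h1
    · -- x - 1 = 1, x = 2, 8 = t^2 impossible
      have hx : x = 2 := by linarith
      subst hx
      exfalso
      have ht : t ^ 2 = 8 := by linarith
      have h2 : t ≤ 2 := by nlinarith [sq_nonneg (t - 3)]
      have h3 : -2 ≤ t := by nlinarith [sq_nonneg (t + 3)]
      nlinarith [h2, h3, ht]
    · have hx : x = 0 := by linarith
      subst hx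
      constructor
      · nlinarith [sq_nonneg t]
      · rfl
  · rintro ⟨rfl, rfl⟩; ring
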